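/- arXiv:1601.00175 — 2 statements merged into one kernel-verified Lean document; each statement's English description precedes it below -/
import Mathlib

section
/- Assume that for every (t,ω) ∈ [0,T] × Ω there exists ω̂ ∈ 𝒜(t,ω) such that X_u(ω̂) < X_t(ω) for all u ∈ (t,T]. Then for every (t,ω) with σ*(ω) ≥ t, the stopping time σ* is Pareto optimal with respect to 𝒜(t,ω): there is no stopping time τ with τ(ω'') ≥ t for all ω'' ∈ 𝒜(t,ω) such that R(t,ω;τ,ω') ≤ R(t,ω;σ*,ω') for all ω' ∈ 𝒜(t,ω) and R(t,ω;τ,ω'') < R(t,ω;σ*,ω'') for some ω'' ∈ 𝒜(t,ω). -/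
open Set

noncomputable section

namespace SellingRegret

/-- Running maximum `X*_t(ω) = sup_{s ∈ [0,t]} X_s(ω)`, where `X_s(ω) = ω s`. -/
def Mstar (ω : ℝ → ℝ) (t : ℝ) : ℝ :=
  sSup (ω '' Set.Icc 0 t)

/-- `𝒜(t,ω)`: the trajectories in `Ω` agreeing with `ω` on `[0,t]`. -/
def Hist (Ω : Set (ℝ → ℝ)) (t : ℝ) (ω : ℝ → ℝ) : Set (ℝ → ℝ) :=
  {ω' ∈ Ω | ∀ s ∈ Set.Icc 0 t, ω' s = ω s}

/-- A stopping time: a map `τ : Ω → [0,T]` such that whenever `τ(ω) ≤ t` and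
`ω'` agrees with `ω` on `[0,t]`, one has `τ(ω') = τ(ω)`. -/
def IsStoppingTime (T : ℝ) (Ω : Set (ℝ → ℝ)) (τ : (ℝ → ℝ) → ℝ) : Prop :=
  (∀ ω ∈ Ω, τ ω ∈ Set.Icc 0 T) ∧
  ∀ ω ∈ Ω, ∀ t ∈ Set.Icc 0 T, τ ω ≤ t →
    ∀ ω' ∈ Ω, (∀ s ∈ Set.Icc 0 t, ω' s = ω s) → τ ω' = τ ω

/-- Estimated regret `R(t,ω;τ,ω') = max{X*_{τ(ω')}(ω') − X_{τ(ω')}(ω'), ψ(τ(ω'),ω')}`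
(it depends only on `τ` and `ω'`). -/
def regret (ψ : ℝ → (ℝ → ℝ) → ℝ) (τ : (ℝ → ℝ) → ℝ) (ω' : ℝ → ℝ) : ℝ :=
  max (Mstar ω' (τ ω') - ω' (τ ω')) (ψ (τ ω') ω')

/-- Worst-case estimated regret `ℛ(t,ω;τ) = sup_{ω' ∈ 𝒜(t,ω)} R(t,ω;τ,ω')`,
valued in `[0,∞]`. -/
def worstRegret (Ω : Set (ℝ → ℝ)) (ψ : ℝ → (ℝ → ℝ) → ℝ)
    (t : ℝ) (ω : ℝ → ℝ) (τ : (ℝ → ℝ) → ℝ) : ENNReal :=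
  ⨆ ω' ∈ Hist Ω t ω, ENNReal.ofReal (regret ψ τ ω')

/-- `σ*(ω) = inf {s ∈ [0,T] : X*_s(ω) − X_s(ω) ≥ ψ(s,ω)}`. -/
def sigmaStar (T : ℝ) (ψ : ℝ → (ℝ → ℝ) → ℝ) (ω : ℝ → ℝ) : ℝ :=
  sInf {s ∈ Set.Icc 0 T | ψ s ω ≤ Mstar ω s - ω s}

/-- `τ ∈ 𝒯_t(ω)`: `τ(ω') ≥ t` for all `ω' ∈ 𝒜(t,ω)`. -/
def Admissible (Ω : Set (ℝ → ℝ)) (t : ℝ) (ω : ℝ → ℝ) (τ : (ℝ → ℝ) → ℝ) : Prop :=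
  ∀ ω' ∈ Hist Ω t ω, t ≤ τ ω'

/-- `σ` is optimal with respect to `𝒜(t,ω)`. -/
def OptimalAt (T : ℝ) (Ω : Set (ℝ → ℝ)) (ψ : ℝ → (ℝ → ℝ) → ℝ)
    (t : ℝ) (ω : ℝ → ℝ) (σ : (ℝ → ℝ) → ℝ) : Prop :=
  IsStoppingTime T Ω σ ∧ Admissible Ω t ω σ ∧
  ∀ τ, IsStoppingTime T Ω τ → Admissible Ω t ω τ →
    worstRegret Ω ψ t ω σ ≤ worstRegret Ω ψ t ω τ

/-- `σ` is Pareto optimal with respect to `𝒜(t,ω)`. -/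
def ParetoOptimalAt (T : ℝ) (Ω : Set (ℝ → ℝ)) (ψ : ℝ → (ℝ → ℝ) → ℝ)
    (t : ℝ) (ω : ℝ → ℝ) (σ : (ℝ → ℝ) → ℝ) : Prop :=
  IsStoppingTime T Ω σ ∧ Admissible Ω t ω σ ∧
  ¬ ∃ τ, IsStoppingTime T Ω τ ∧ Admissible Ω t ω τ ∧
      (∀ ω' ∈ Hist Ω t ω, regret ψ τ ω' ≤ regret ψ σ ω') ∧
      ∃ ω'' ∈ Hist Ω t ω, regret ψ τ ω'' < regret ψ σ ω''

/-- `σ` is perfect: optimal and Pareto optimal with respect to `𝒜(t,ω)`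
whenever it is admissible for `𝒜(t,ω)`. -/
def Perfect (T : ℝ) (Ω : Set (ℝ → ℝ)) (ψ : ℝ → (ℝ → ℝ) → ℝ)
    (σ : (ℝ → ℝ) → ℝ) : Prop :=
  IsStoppingTime T Ω σ ∧
  ∀ t ∈ Set.Icc 0 T, ∀ ω ∈ Ω, Admissible Ω t ω σ →
    OptimalAt T Ω ψ t ω σ ∧ ParetoOptimalAt T Ω ψ t ω σ

/-- Conditions (A) and (B) of Theorem 2 for a stopping time `σ`. -/
def CondAB (T : ℝ) (Ω : Set (ℝ → ℝ)) (ψ : ℝ → (ℝ → ℝ) → ℝ)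
    (σ : (ℝ → ℝ) → ℝ) : Prop :=
  ∀ τ, IsStoppingTime T Ω τ → ∀ ω ∈ Ω,
    (σ ω < τ ω → ∃ ω' ∈ Hist Ω (σ ω) ω, regret ψ σ ω' < regret ψ τ ω') ∧
    (τ ω < σ ω → ∀ ω' ∈ Hist Ω (τ ω) ω, regret ψ σ ω' < regret ψ τ ω')

/-- `Ω = C([0,T],ℝ)`: all trajectories continuous on `[0,T]`. -/
def OmegaC (T : ℝ) : Set (ℝ → ℝ) :=
  {ω | ContinuousOn ω (Set.Icc 0 T)}

/-- The two-sided Lipschitz corridor of Example 2: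
`−L₁(t−s) ≤ ω(t) − ω(s) ≤ L₂(t−s)` for `0 ≤ s ≤ t ≤ T`. -/
def OmegaL (T L₁ L₂ : ℝ) : Set (ℝ → ℝ) :=
  {ω | ∀ s t : ℝ, 0 ≤ s → s ≤ t → t ≤ T →
    -L₁ * (t - s) ≤ ω t - ω s ∧ ω t - ω s ≤ L₂ * (t - s)}

section Helpers

variable {T : ℝ} {Ω : Set (ℝ → ℝ)} {ψ : ℝ → (ℝ → ℝ) → ℝ}

lemma mstar_bdd {ω : ℝ → ℝ} (hc : ContinuousOn ω (Set.Icc 0 T)) {s : ℝ}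
    (hs : s ∈ Set.Icc 0 T) : BddAbove (ω '' Set.Icc 0 s) :=
  (isCompact_Icc.image_of_continuousOn
    (hc.mono (Set.Icc_subset_Icc le_rfl hs.2))).bddAbove

lemma le_mstar {ω : ℝ → ℝ} (hc : ContinuousOn ω (Set.Icc 0 T)) {s u : ℝ}
    (hs : s ∈ Set.Icc 0 T) (hu : u ∈ Set.Icc 0 s) : ω u ≤ Mstar ω s :=
  le_csSup (mstar_bdd hc hs) ⟨u, hu, rfl⟩

lemma mstar_mono {ω : ℝ → ℝ} (hc : ContinuousOn ω (Set.Icc 0 T)) {s s' : ℝ}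
    (hs0 : 0 ≤ s) (hss' : s ≤ s') (hs' : s' ∈ Set.Icc 0 T) :
    Mstar ω s ≤ Mstar ω s' :=
  csSup_le_csSup (mstar_bdd hc hs') ⟨ω 0, ⟨0, ⟨le_rfl, hs0⟩, rfl⟩⟩
    (Set.image_mono (Set.Icc_subset_Icc le_rfl hss'))

lemma mstar_congr {ω₁ ω₂ : ℝ → ℝ} {s : ℝ}
    (h : ∀ u ∈ Set.Icc 0 s, ω₂ u = ω₁ u) : Mstar ω₂ s = Mstar ω₁ s := by
  unfold Mstar
  rw [Set.image_congr h]

/-- The hitting set defining `sigmaStar`. -/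
def hitSet (T : ℝ) (ψ : ℝ → (ℝ → ℝ) → ℝ) (ω : ℝ → ℝ) : Set ℝ :=
  {s ∈ Set.Icc 0 T | ψ s ω ≤ Mstar ω s - ω s}

lemma sigmaStar_eq_sInf (ω : ℝ → ℝ) : sigmaStar T ψ ω = sInf (hitSet T ψ ω) := rfl

lemma hitSet_bddBelow (ω : ℝ → ℝ) : BddBelow (hitSet T ψ ω) :=
  ⟨0, fun s hs => hs.1.1⟩

lemma T_mem_hitSet (hT : 0 ≤ T) {ω : ℝ → ℝ} (hc : ContinuousOn ω (Set.Icc 0 T))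
    (hψT : ψ T ω = 0) : T ∈ hitSet T ψ ω := by
  refine ⟨Set.right_mem_Icc.2 hT, ?_⟩
  have := le_mstar hc (Set.right_mem_Icc.2 hT) (Set.right_mem_Icc.2 hT)
  rw [hψT]; linarith

lemma sigmaStar_mem_Icc (hT : 0 ≤ T) {ω : ℝ → ℝ}
    (hc : ContinuousOn ω (Set.Icc 0 T)) (hψT : ψ T ω = 0) :
    sigmaStar T ψ ω ∈ Set.Icc 0 T := by
  constructor
  · exact le_csInf ⟨T, T_mem_hitSet hT hc hψT⟩ fun s hs => hs.1.1
  · exact csInf_le (hitSet_bddBelow ω) (T_mem_hitSet hT hc hψT)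

lemma sigmaStar_le {ω : ℝ → ℝ} {s : ℝ} (hs : s ∈ hitSet T ψ ω) :
    sigmaStar T ψ ω ≤ s :=
  csInf_le (hitSet_bddBelow ω) hs

/-- At `σ*(ω)` we have `ψ(σ*) = M*(σ*) - ω(σ*)`. -/
lemma sigmaStar_eq (hT : 0 ≤ T) {ω : ℝ → ℝ}
    (hc : ContinuousOn ω (Set.Icc 0 T)) (hψT : ψ T ω = 0)
    (hψnn : ∀ t ∈ Set.Icc 0 T, 0 ≤ ψ t ω)
    (hψc : ContinuousOn (fun t => ψ t ω) (Set.Icc 0 T)) :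
    ψ (sigmaStar T ψ ω) ω = Mstar ω (sigmaStar T ψ ω) - ω (sigmaStar T ψ ω) := by
  set s₀ := sigmaStar T ψ ω with hs₀
  have hs₀mem : s₀ ∈ Set.Icc 0 T := sigmaStar_mem_Icc hT hc hψT
  have hcω : ContinuousWithinAt ω (Set.Icc 0 T) s₀ := hc s₀ hs₀mem
  have hcψ : ContinuousWithinAt (fun t => ψ t ω) (Set.Icc 0 T) s₀ := hψc s₀ hs₀mem
  have hne : (hitSet T ψ ω).Nonempty := ⟨T, T_mem_hitSet hT hc hψT⟩
  -- upper bound: ψ(s₀) ≤ M*(s₀) - ω(s₀)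
  have hub : ψ s₀ ω ≤ Mstar ω s₀ - ω s₀ := by
    refine le_of_forall_pos_le_add fun ε hε => ?_
    have hε3 : (0:ℝ) < ε / 3 := by linarith
    obtain ⟨δ₁, hδ₁, hδ₁p⟩ := (Metric.continuousWithinAt_iff.1 hcω) (ε/3) hε3
    obtain ⟨δ₂, hδ₂, hδ₂p⟩ := (Metric.continuousWithinAt_iff.1 hcψ) (ε/3) hε3
    set δ := min δ₁ δ₂ with hδdef
    have hδ : 0 < δ := lt_min hδ₁ hδ₂
    -- find s ∈ hitSet with s₀ ≤ s < s₀ + δ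
    have h1 : sInf (hitSet T ψ ω) < s₀ + δ := by
      have : sInf (hitSet T ψ ω) = s₀ := rfl
      rw [this]; linarith
    obtain ⟨s, hsmem, hslt⟩ := (csInf_lt_iff (hitSet_bddBelow ω) hne).1 h1
    have hs₀s : s₀ ≤ s := sigmaStar_le hsmem
    have hsIcc : s ∈ Set.Icc 0 T := hsmem.1
    have hdist : dist s s₀ < δ := by
      rw [Real.dist_eq, abs_of_nonneg (by linarith)]; linarith
    have hψs : |ψ s ω - ψ s₀ ω| < ε/3 := by
      have := hδ₂p hsIcc (lt_of_lt_of_le hdist (min_le_right _ _))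
      rwa [Real.dist_eq] at this
    have hωs : |ω s - ω s₀| < ε/3 := by
      have := hδ₁p hsIcc (lt_of_lt_of_le hdist (min_le_left _ _))
      rwa [Real.dist_eq] at this
    -- M*(s) ≤ M*(s₀) + ε/3
    have hM : Mstar ω s ≤ Mstar ω s₀ + ε/3 := by
      rw [show Mstar ω s = sSup (ω '' Set.Icc 0 s) from rfl]
      have hne' : (ω '' Set.Icc 0 s).Nonempty := ⟨ω 0, 0, ⟨le_rfl, hsIcc.1⟩, rfl⟩
      apply csSup_le hne'
      rintro x ⟨u, hu, rfl⟩
      rcases le_or_gt u s₀ with h | h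
      · have : ω u ≤ Mstar ω s₀ := le_mstar hc hs₀mem ⟨hu.1, h⟩
        linarith
      · have huIcc : u ∈ Set.Icc 0 T := ⟨hu.1, hu.2.trans hsIcc.2⟩
        have hdu : dist u s₀ < δ := by
          rw [Real.dist_eq, abs_of_nonneg (by linarith [h.le])]
          have : u ≤ s := hu.2
          linarith
        have := hδ₁p huIcc (lt_of_lt_of_le hdu (min_le_left _ _))
        rw [Real.dist_eq] at this
        have h1 : ω u < ω s₀ + ε/3 := by
          have := abs_lt.1 this; linarith [this.2]
        have h2 : ω s₀ ≤ Mstar ω s₀ := le_mstar hc hs₀mem ⟨hs₀mem.1, le_rfl⟩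
        linarith
    have habs1 := abs_lt.1 hψs
    have habs2 := abs_lt.1 hωs
    have hss : ψ s ω ≤ Mstar ω s - ω s := hsmem.2
    linarith [habs1.1, habs2.2]
  -- lower bound: M*(s₀) - ω(s₀) ≤ ψ(s₀)
  have hlb : Mstar ω s₀ - ω s₀ ≤ ψ s₀ ω := by
    by_contra h
    push_neg at h
    -- M* attained at some r
    have hcomp : IsCompact (ω '' Set.Icc 0 s₀) :=
      isCompact_Icc.image_of_continuousOn (hc.mono (Set.Icc_subset_Icc le_rfl hs₀mem.2))
    have hmem : Mstar ω s₀ ∈ ω '' Set.Icc 0 s₀ :=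
      hcomp.sSup_mem ⟨ω 0, ⟨0, ⟨le_rfl, hs₀mem.1⟩, rfl⟩⟩
    obtain ⟨r, hr, hreq⟩ := hmem
    have hgap : 0 < ω r - ω s₀ - ψ s₀ ω := by rw [hreq]; linarith
    have hrs₀ : r < s₀ := by
      rcases lt_or_eq_of_le hr.2 with h' | h'
      · exact h'
      · exfalso
        have := hψnn s₀ hs₀mem
        rw [h'] at hgap; linarith
    set ε := (ω r - ω s₀ - ψ s₀ ω) / 3 with hεdef
    have hε : 0 < ε := by positivity
    obtain ⟨δ₁, hδ₁, hδ₁p⟩ := (Metric.continuousWithinAt_iff.1 hcω) ε hε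
    obtain ⟨δ₂, hδ₂, hδ₂p⟩ := (Metric.continuousWithinAt_iff.1 hcψ) ε hε
    set δ := min δ₁ δ₂ with hδdef
    have hδ : 0 < δ := lt_min hδ₁ hδ₂
    set s := max r (s₀ - δ/2) with hsdef
    have hss₀ : s < s₀ := by
      apply max_lt hrs₀; linarith
    have hrs : r ≤ s := le_max_left _ _
    have hsIcc : s ∈ Set.Icc 0 T := ⟨hr.1.trans hrs, hss₀.le.trans hs₀mem.2⟩
    have hdist : dist s s₀ < δ := by
      rw [Real.dist_eq, abs_of_nonpos (by linarith)]
      have : s₀ - δ/2 ≤ s := le_max_right _ _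
      linarith
    have hψs := hδ₂p hsIcc (lt_of_lt_of_le hdist (min_le_right _ _))
    have hωs := hδ₁p hsIcc (lt_of_lt_of_le hdist (min_le_left _ _))
    rw [Real.dist_eq] at hψs hωs
    have h1 := abs_lt.1 hψs
    have h2 := abs_lt.1 hωs
    have hsmem : s ∈ hitSet T ψ ω := by
      refine ⟨hsIcc, ?_⟩
      have hrM : ω r ≤ Mstar ω s := le_mstar hc hsIcc ⟨hr.1, hrs⟩
      have hb1 : ψ s ω < ψ s₀ ω + ε := by linarith [h1.2]
      have hb2 : ω s < ω s₀ + ε := by linarith [h2.2]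
      have : ψ s ω + ω s < ω r := by
        rw [hεdef] at hb1 hb2; linarith
      linarith
    have h3 := sigmaStar_le (T := T) (ψ := ψ) hsmem
    have h4 : sigmaStar T ψ ω = s₀ := rfl
    rw [h4] at h3
    linarith
  linarith

end Helpers

/-- under the reaching assumption, for every `(t,ω)` with
`σ*(ω) ≥ t`, the stopping time `σ*` is Pareto optimal with respect to `𝒜(t,ω)`:
no admissible stopping time `τ` satisfies `R(t,ω;τ,ω') ≤ R(t,ω;σ*,ω')` for all
`ω' ∈ 𝒜(t,ω)` with strict inequality for some `ω'' ∈ 𝒜(t,ω)`. -/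
theorem stmt7 (T : ℝ) (hT : 0 < T) (Ω : Set (ℝ → ℝ))
    (hΩ : ∀ ω ∈ Ω, ContinuousOn ω (Set.Icc 0 T))
    (ψ : ℝ → (ℝ → ℝ) → ℝ)
    (hψT : ∀ ω ∈ Ω, ψ T ω = 0)
    (hψnn : ∀ ω ∈ Ω, ∀ t ∈ Set.Icc 0 T, 0 ≤ ψ t ω)
    (hψc : ∀ ω ∈ Ω, ContinuousOn (fun t => ψ t ω) (Set.Icc 0 T))
    (hψa : ∀ ω ∈ Ω, StrictAntiOn (fun t => ψ t ω) (Set.Icc 0 T))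
    (hψh : ∀ t ∈ Set.Icc 0 T, ∀ ω ∈ Ω, ∀ ω' ∈ Hist Ω t ω, ψ t ω' = ψ t ω)
    (hreach : ∀ t ∈ Set.Icc 0 T, ∀ ω ∈ Ω,
      ∃ ωh ∈ Hist Ω t ω, ∀ u, t < u → u ≤ T → ωh u < ω t)
    (t : ℝ) (ht : t ∈ Set.Icc 0 T) (ω : ℝ → ℝ) (hω : ω ∈ Ω)
    (hσ : t ≤ sigmaStar T ψ ω) :
    ¬ ∃ τ, IsStoppingTime T Ω τ ∧ (∀ ω'' ∈ Hist Ω t ω, t ≤ τ ω'') ∧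
        (∀ ω' ∈ Hist Ω t ω, regret ψ τ ω' ≤ regret ψ (sigmaStar T ψ) ω') ∧
        ∃ ω'' ∈ Hist Ω t ω, regret ψ τ ω'' < regret ψ (sigmaStar T ψ) ω'':= by
  rintro ⟨τ, hτstop, hτadm, hle, ω'', hω''H, hlt⟩
  obtain ⟨hΩ'', hagree⟩ := hω''H
  have hT0 : (0:ℝ) ≤ T := hT.le
  have hc'' : ContinuousOn ω'' (Set.Icc 0 T) := hΩ ω'' hΩ''
  set s₂ := sigmaStar T ψ ω'' with hs₂def
  have hs₂Icc : s₂ ∈ Set.Icc 0 T := sigmaStar_mem_Icc hT0 hc'' (hψT ω'' hΩ'')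
  have hs₂eq : ψ s₂ ω'' = Mstar ω'' s₂ - ω'' s₂ :=
    sigmaStar_eq hT0 hc'' (hψT ω'' hΩ'') (hψnn ω'' hΩ'') (hψc ω'' hΩ'')
  -- transferring hitSet membership along histories
  have transfer : ∀ a : ℝ, a ∈ Set.Icc 0 T → ∀ ω₁, ω₁ ∈ Ω → ∀ ω₂, ω₂ ∈ Hist Ω a ω₁ →
      ∀ s ∈ Set.Icc 0 T, s ≤ a → (s ∈ hitSet T ψ ω₂ ↔ s ∈ hitSet T ψ ω₁) := by
    intro a ha ω₁ h₁ ω₂ h₂ s hs hsa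
    have hsub : Set.Icc (0:ℝ) s ⊆ Set.Icc 0 a := Set.Icc_subset_Icc le_rfl hsa
    have hHs : ω₂ ∈ Hist Ω s ω₁ := ⟨h₂.1, fun u hu => h₂.2 u (hsub hu)⟩
    have e1 : ψ s ω₂ = ψ s ω₁ := hψh s hs ω₁ h₁ ω₂ hHs
    have e2 : Mstar ω₂ s = Mstar ω₁ s := mstar_congr (fun u hu => hHs.2 u hu)
    have e3 : ω₂ s = ω₁ s := hHs.2 s ⟨hs.1, le_rfl⟩
    have key : (ψ s ω₂ ≤ Mstar ω₂ s - ω₂ s) ↔ (ψ s ω₁ ≤ Mstar ω₁ s - ω₁ s) := by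
      rw [e1, e2, e3]
    exact ⟨fun hm => ⟨hs, key.1 hm.2⟩, fun hm => ⟨hs, key.2 hm.2⟩⟩
  -- t ≤ σ*(ω'')
  have hts₂ : t ≤ s₂ := by
    rw [hs₂def, sigmaStar_eq_sInf]
    refine le_csInf ⟨T, T_mem_hitSet hT0 hc'' (hψT ω'' hΩ'')⟩ fun s hs => ?_
    by_contra hst
    push_neg at hst
    have hsmem : s ∈ hitSet T ψ ω :=
      (transfer t ht ω hω ω'' ⟨hΩ'', hagree⟩ s hs.1 hst.le).1 hs
    have h1 := sigmaStar_le (T := T) (ψ := ψ) hsmem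
    linarith
  have hregσ'' : regret ψ (sigmaStar T ψ) ω'' = ψ s₂ ω'' := by
    unfold regret
    rw [← hs₂def, ← hs₂eq, max_self]
  have hτIcc'' : τ ω'' ∈ Set.Icc 0 T := hτstop.1 ω'' hΩ''
  rcases lt_trichotomy (τ ω'') s₂ with hcase | hcase | hcase
  · -- stopping earlier than σ* is strictly worse in ψ
    have h1 : ψ s₂ ω'' < ψ (τ ω'') ω'' := hψa ω'' hΩ'' hτIcc'' hs₂Icc hcase
    have h2 : ψ (τ ω'') ω'' ≤ regret ψ τ ω'' := le_max_right _ _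
    rw [hregσ''] at hlt
    linarith
  · -- equal stopping values give equal regrets
    have heq : regret ψ τ ω'' = regret ψ (sigmaStar T ψ) ω'' := by
      unfold regret
      rw [hcase, ← hs₂def]
    rw [heq] at hlt
    exact lt_irrefl _ hlt
  · -- stopping later: use the reaching path
    obtain ⟨ωh, hωhH, hdrop⟩ := hreach s₂ hs₂Icc ω'' hΩ''
    obtain ⟨hΩh, hagreeh⟩ := hωhH
    have hch : ContinuousOn ωh (Set.Icc 0 T) := hΩ ωh hΩh
    have hωhHist : ωh ∈ Hist Ω t ω :=
      ⟨hΩh, fun s hs => (hagreeh s ⟨hs.1, hs.2.trans hts₂⟩).trans (hagree s hs)⟩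
    have hτh : s₂ < τ ωh := by
      by_contra h
      push_neg at h
      have heq := hτstop.2 ωh hΩh s₂ hs₂Icc h ω'' hΩ''
        (fun s hs => (hagreeh s hs).symm)
      linarith
    have hτhIcc : τ ωh ∈ Set.Icc 0 T := hτstop.1 ωh hΩh
    have hs₂h : s₂ ∈ hitSet T ψ ωh :=
      (transfer s₂ hs₂Icc ω'' hΩ'' ωh ⟨hΩh, hagreeh⟩ s₂ hs₂Icc le_rfl).2
        ⟨hs₂Icc, hs₂eq.le⟩
    have hσh : sigmaStar T ψ ωh = s₂ := by
      apply le_antisymm (sigmaStar_le hs₂h)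
      rw [sigmaStar_eq_sInf]
      refine le_csInf ⟨s₂, hs₂h⟩ fun s hs => ?_
      by_contra hst
      push_neg at hst
      have hmem : s ∈ hitSet T ψ ω'' :=
        (transfer s₂ hs₂Icc ω'' hΩ'' ωh ⟨hΩh, hagreeh⟩ s hs.1 hst.le).1 hs
      have h1 := sigmaStar_le (T := T) (ψ := ψ) hmem
      rw [← hs₂def] at h1
      linarith
    have hMeq : Mstar ωh s₂ = Mstar ω'' s₂ := mstar_congr hagreeh
    have hveq : ωh s₂ = ω'' s₂ := hagreeh s₂ ⟨hs₂Icc.1, le_rfl⟩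
    have hψeq : ψ s₂ ωh = ψ s₂ ω'' := hψh s₂ hs₂Icc ω'' hΩ'' ωh ⟨hΩh, hagreeh⟩
    have hregσh : regret ψ (sigmaStar T ψ) ωh = Mstar ω'' s₂ - ω'' s₂ := by
      unfold regret
      rw [hσh, hMeq, hveq, hψeq, hs₂eq, max_self]
    have hdropu : ωh (τ ωh) < ω'' s₂ := hdrop (τ ωh) hτh hτhIcc.2
    have hMmono : Mstar ω'' s₂ ≤ Mstar ωh (τ ωh) := by
      rw [← hMeq]
      exact mstar_mono hch hs₂Icc.1 hτh.le hτhIcc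
    have hmax : Mstar ωh (τ ωh) - ωh (τ ωh) ≤ regret ψ τ ωh := le_max_left _ _
    have hdom := hle ωh hωhHist
    rw [hregσh] at hdom
    linarith


end SellingRegret

end
end

section
/- Assume that for every (t,ω) ∈ [0,T] × Ω there exists ω̂ ∈ 𝒜(t,ω) such that X_u(ω̂) < X_t(ω) for all u ∈ (t,T]. Then σ* satisfies conditions (A) and (B): for any stopping time τ and any ω ∈ Ω, (A) if τ(ω) > σ*(ω) then R(σ*(ω),ω;τ,ω') > R(σ*(ω),ω;σ*,ω') for some ω' ∈ 𝒜(σ*(ω),ω), and (B) if τ(ω) < σ*(ω) then R(τ(ω),ω;τ,ω') > R(τ(ω),ω;σ*,ω') for all ω' ∈ 𝒜(τ(ω),ω). -/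
open Set

noncomputable section

namespace SellingRegret

/-! ### Auxiliary lemmas -/

open Filter Topology

section

variable {T : ℝ}

lemma bddAbove_img {ω : ℝ → ℝ} (hω : ContinuousOn ω (Icc 0 T)) {s : ℝ} (hs : s ≤ T) :
    BddAbove (ω '' Icc 0 s) :=
  ((isCompact_Icc.image_of_continuousOn hω).bddAbove).mono
    (image_mono (Icc_subset_Icc le_rfl hs))

lemma le_mstar_s9 {ω : ℝ → ℝ} (hω : ContinuousOn ω (Icc 0 T)) {s t : ℝ}
    (hs : s ∈ Icc 0 t) (ht : t ≤ T) : ω s ≤ Mstar ω t :=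
  le_csSup (bddAbove_img hω ht) (mem_image_of_mem ω hs)

lemma mstar_mono_s9 {ω : ℝ → ℝ} (hω : ContinuousOn ω (Icc 0 T)) {s t : ℝ}
    (h0 : 0 ≤ s) (hst : s ≤ t) (htT : t ≤ T) : Mstar ω s ≤ Mstar ω t :=
  csSup_le_csSup (bddAbove_img hω htT)
    ⟨ω 0, mem_image_of_mem _ ⟨le_rfl, h0⟩⟩ (image_mono (Icc_subset_Icc le_rfl hst))

lemma mstar_close {ω : ℝ → ℝ} (hω : ContinuousOn ω (Icc 0 T)) {δ ε : ℝ}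
    (hu : ∀ p ∈ Icc 0 T, ∀ q ∈ Icc 0 T, dist p q < δ → dist (ω p) (ω q) ≤ ε) (hδ : 0 < δ)
    {a b : ℝ} (ha : a ∈ Icc 0 T) (hb : b ∈ Icc 0 T) (hab : a ≤ b) (hd : b - a < δ) :
    Mstar ω b ≤ Mstar ω a + ε := by
  apply csSup_le (by exact ⟨ω 0, mem_image_of_mem _ ⟨le_rfl, ha.1.trans hab⟩⟩)
  rintro _ ⟨s, hs, rfl⟩
  have hsT : s ∈ Icc 0 T := ⟨hs.1, hs.2.trans hb.2⟩
  by_cases h : s ≤ a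
  · have := le_mstar_s9 hω (⟨hs.1, h⟩ : s ∈ Icc 0 a) ha.2
    have hε : 0 ≤ ε := by
      have := hu a ha a ha (by simpa using hδ)
      simpa using this
    linarith
  · push_neg at h
    have hdist : dist s a < δ := by
      rw [Real.dist_eq, abs_of_nonneg (by linarith)]; linarith [hs.2]
    have h2 := hu s hsT a ha hdist
    rw [Real.dist_eq] at h2
    have h3 : ω s ≤ ω a + ε := by
      have := abs_le.mp h2; linarith [this.1, this.2]
    have := le_mstar_s9 hω (⟨ha.1, le_rfl⟩ : a ∈ Icc 0 a) ha.2
    linarith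

lemma mstar_continuousOn {ω : ℝ → ℝ} (hω : ContinuousOn ω (Icc 0 T)) :
    ContinuousOn (Mstar ω) (Icc 0 T) := by
  rw [Metric.continuousOn_iff]
  intro x hx ε hε
  obtain ⟨δ, hδ, hu⟩ := Metric.uniformContinuousOn_iff.mp
    (isCompact_Icc.uniformContinuousOn_of_continuous hω) (ε/2) (by linarith)
  refine ⟨δ, hδ, fun y hy hxy => ?_⟩
  have hu' : ∀ p ∈ Icc 0 T, ∀ q ∈ Icc 0 T, dist p q < δ → dist (ω p) (ω q) ≤ ε/2 :=
    fun p hp q hq hpq => (hu p hp q hq hpq).le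
  rw [Real.dist_eq] at hxy ⊢
  have habs := abs_lt.mp hxy
  rw [abs_lt]
  rcases le_total x y with h | h
  · have h1 := mstar_mono_s9 hω hx.1 h hy.2
    have h2 := mstar_close hω hu' hδ hx hy h (by linarith [habs.1, habs.2])
    constructor <;> linarith
  · have h1 := mstar_mono_s9 hω hy.1 h hx.2
    have h2 := mstar_close hω hu' hδ hy hx h (by linarith [habs.1, habs.2])
    constructor <;> linarith

lemma sigma_facts (T : ℝ) (ψ : ℝ → (ℝ → ℝ) → ℝ) {ω : ℝ → ℝ}
    (hω : ContinuousOn ω (Icc 0 T)) (hT : 0 ≤ T)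
    (hψT : ψ T ω = 0)
    (hψc : ContinuousOn (fun t => ψ t ω) (Icc 0 T)) :
    sigmaStar T ψ ω ∈ Icc 0 T ∧
    ψ (sigmaStar T ψ ω) ω ≤ Mstar ω (sigmaStar T ψ ω) - ω (sigmaStar T ψ ω) ∧
    ∀ s ∈ Icc 0 T, s < sigmaStar T ψ ω → Mstar ω s - ω s < ψ s ω := by
  set S := {s ∈ Icc 0 T | ψ s ω ≤ Mstar ω s - ω s} with hS
  have hdef : sigmaStar T ψ ω = sInf S := rfl
  have hTS : T ∈ S := ⟨⟨hT, le_rfl⟩, by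
    rw [hψT]; have := le_mstar_s9 hω (⟨hT, le_rfl⟩ : T ∈ Icc 0 T) le_rfl; linarith⟩
  have hbdd : BddBelow S := ⟨0, fun s hs => hs.1.1⟩
  have hFcont : ContinuousOn (fun s => Mstar ω s - ω s - ψ s ω) (Icc 0 T) :=
    ((mstar_continuousOn hω).sub hω).sub hψc
  have hclosed : IsClosed S := by
    have heq : S = Icc 0 T ∩ (fun s => Mstar ω s - ω s - ψ s ω) ⁻¹' (Ici 0) := by
      ext s
      simp only [hS, mem_sep_iff, mem_inter_iff, mem_preimage, mem_Ici]
      constructor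
      · rintro ⟨h1, h2⟩; exact ⟨h1, by linarith⟩
      · rintro ⟨h1, h2⟩; exact ⟨h1, by linarith⟩
    rw [heq]
    exact hFcont.preimage_isClosed_of_isClosed isClosed_Icc isClosed_Ici
  have hmem : sInf S ∈ S := hclosed.csInf_mem ⟨T, hTS⟩ hbdd
  rw [hdef]
  refine ⟨hmem.1, hmem.2, fun s hs hlt => ?_⟩
  by_contra h
  push_neg at h
  exact absurd (csInf_le hbdd (⟨hs, h⟩ : s ∈ S)) (not_le.mpr hlt)

lemma hist_eq (Ω : Set (ℝ → ℝ)) (ψ : ℝ → (ℝ → ℝ) → ℝ) {T t : ℝ} (htT : t ∈ Icc 0 T)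
    (hψh : ∀ t ∈ Icc 0 T, ∀ ω ∈ Ω, ∀ ω' ∈ Hist Ω t ω, ψ t ω' = ψ t ω)
    {ω ω' : ℝ → ℝ} (hω : ω ∈ Ω) (hω' : ω' ∈ Hist Ω t ω) {s : ℝ} (hs : s ∈ Icc 0 t) :
    ω' s = ω s ∧ Mstar ω' s = Mstar ω s ∧ ψ s ω' = ψ s ω := by
  obtain ⟨hΩ', hag⟩ := hω'
  refine ⟨hag s hs, ?_, ?_⟩
  · unfold Mstar
    congr 1
    exact image_congr (fun x hx => hag x ⟨hx.1, hx.2.trans hs.2⟩)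
  · exact hψh s ⟨hs.1, hs.2.trans htT.2⟩ ω hω ω'
      ⟨hΩ', fun x hx => hag x ⟨hx.1, hx.2.trans hs.2⟩⟩

end

/-- Theorem 2, necessity: under the reaching assumption, `σ*`
satisfies conditions (A) and (B): for any stopping time `τ` and any `ω ∈ Ω`,
(A) if `τ(ω) > σ*(ω)` then `R(σ*(ω),ω;τ,ω') > R(σ*(ω),ω;σ*,ω')` for some
`ω' ∈ 𝒜(σ*(ω),ω)`, and (B) if `τ(ω) < σ*(ω)` then
`R(τ(ω),ω;τ,ω') > R(τ(ω),ω;σ*,ω')` for all `ω' ∈ 𝒜(τ(ω),ω)`. -/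
theorem stmt9 (T : ℝ) (hT : 0 < T) (Ω : Set (ℝ → ℝ))
    (hΩ : ∀ ω ∈ Ω, ContinuousOn ω (Set.Icc 0 T))
    (ψ : ℝ → (ℝ → ℝ) → ℝ)
    (hψT : ∀ ω ∈ Ω, ψ T ω = 0)
    (hψnn : ∀ ω ∈ Ω, ∀ t ∈ Set.Icc 0 T, 0 ≤ ψ t ω)
    (hψc : ∀ ω ∈ Ω, ContinuousOn (fun t => ψ t ω) (Set.Icc 0 T))
    (hψa : ∀ ω ∈ Ω, StrictAntiOn (fun t => ψ t ω) (Set.Icc 0 T))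
    (hψh : ∀ t ∈ Set.Icc 0 T, ∀ ω ∈ Ω, ∀ ω' ∈ Hist Ω t ω, ψ t ω' = ψ t ω)
    (hreach : ∀ t ∈ Set.Icc 0 T, ∀ ω ∈ Ω,
      ∃ ωh ∈ Hist Ω t ω, ∀ u, t < u → u ≤ T → ωh u < ω t) :
    CondAB T Ω ψ (sigmaStar T ψ) := by
  open Filter Topology in
  show CondAB T Ω ψ (sigmaStar T ψ)
  intro τ hτ ω hω
  have hωc := hΩ ω hω
  obtain ⟨hσIcc, hσle, hσlt⟩ := sigma_facts T ψ hωc hT.le (hψT ω hω) (hψc ω hω)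
  constructor
  · -- Condition (A)
    intro hlt
    obtain ⟨ωh, hωhH, hdrop⟩ := hreach (sigmaStar T ψ ω) hσIcc ω hω
    obtain ⟨hωhΩ, hωhag⟩ := hωhH
    have hωhc := hΩ ωh hωhΩ
    have hτωh : sigmaStar T ψ ω < τ ωh := by
      by_contra h
      push_neg at h
      have := hτ.2 ωh hωhΩ (sigmaStar T ψ ω) hσIcc h ω hω (fun s hs => (hωhag s hs).symm)
      linarith
    have hτT : τ ωh ≤ T := (hτ.1 ωh hωhΩ).2
    have htrans : ∀ s ∈ Icc 0 (sigmaStar T ψ ω),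
        ω s = ωh s ∧ Mstar ω s = Mstar ωh s ∧ ψ s ω = ψ s ωh := by
      intro s hs
      obtain ⟨g1, g2, g3⟩ := hist_eq Ω ψ hσIcc hψh hω ⟨hωhΩ, hωhag⟩ hs
      exact ⟨g1.symm, g2.symm, g3.symm⟩
    obtain ⟨hσhIcc, hσhle, hσhlt⟩ := sigma_facts T ψ hωhc hT.le (hψT ωh hωhΩ) (hψc ωh hωhΩ)
    have hbddh : BddBelow {s ∈ Icc 0 T | ψ s ωh ≤ Mstar ωh s - ωh s} :=
      ⟨0, fun s hs => hs.1.1⟩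
    have hbddω : BddBelow {s ∈ Icc 0 T | ψ s ω ≤ Mstar ω s - ω s} :=
      ⟨0, fun s hs => hs.1.1⟩
    have hmemh : sigmaStar T ψ ω ∈ {s ∈ Icc 0 T | ψ s ωh ≤ Mstar ωh s - ωh s} := by
      obtain ⟨g1, g2, g3⟩ := htrans (sigmaStar T ψ ω) ⟨hσIcc.1, le_rfl⟩
      exact ⟨hσIcc, by rw [← g1, ← g2, ← g3]; exact hσle⟩
    have hσle' : sigmaStar T ψ ωh ≤ sigmaStar T ψ ω := csInf_le hbddh hmemh
    have hσωh : sigmaStar T ψ ωh = sigmaStar T ψ ω := by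
      rcases eq_or_lt_of_le hσle' with h | h
      · exact h
      · exfalso
        obtain ⟨g1, g2, g3⟩ := htrans (sigmaStar T ψ ωh) ⟨hσhIcc.1, h.le⟩
        have hmemω : sigmaStar T ψ ωh ∈ {s ∈ Icc 0 T | ψ s ω ≤ Mstar ω s - ω s} :=
          ⟨hσhIcc, by rw [g1, g2, g3]; exact hσhle⟩
        exact absurd (csInf_le hbddω hmemω) (not_le.mpr h)
    refine ⟨ωh, ⟨hωhΩ, hωhag⟩, ?_⟩
    obtain ⟨e1, e2, e3⟩ := htrans (sigmaStar T ψ ω) ⟨hσIcc.1, le_rfl⟩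
    have hreg1 : regret ψ (sigmaStar T ψ) ωh = Mstar ω (sigmaStar T ψ ω) - ω (sigmaStar T ψ ω) := by
      unfold regret
      rw [hσωh, ← e1, ← e2, ← e3]
      exact max_eq_left hσle
    have hkey : Mstar ω (sigmaStar T ψ ω) - ω (sigmaStar T ψ ω)
        < Mstar ωh (τ ωh) - ωh (τ ωh) := by
      have h1 : Mstar ω (sigmaStar T ψ ω) ≤ Mstar ωh (τ ωh) := by
        rw [e2]; exact mstar_mono_s9 hωhc hσIcc.1 hτωh.le hτT
      have h2 : ωh (τ ωh) < ω (sigmaStar T ψ ω) := hdrop (τ ωh) hτωh hτT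
      linarith
    rw [hreg1]
    exact lt_of_lt_of_le hkey (le_max_left _ _)
  · -- Condition (B)
    intro hlt ω' hω'H
    obtain ⟨hω'Ω, hω'ag⟩ := hω'H
    have hω'c := hΩ ω' hω'Ω
    have htmem : τ ω ∈ Icc 0 T := hτ.1 ω hω
    have hτω' : τ ω' = τ ω := hτ.2 ω hω (τ ω) htmem le_rfl ω' hω'Ω hω'ag
    obtain ⟨e1, e2, e3⟩ := hist_eq Ω ψ htmem hψh hω ⟨hω'Ω, hω'ag⟩
      (⟨htmem.1, le_rfl⟩ : τ ω ∈ Icc 0 (τ ω))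
    have hstrict : Mstar ω (τ ω) - ω (τ ω) < ψ (τ ω) ω := hσlt (τ ω) htmem hlt
    have hregτ : regret ψ τ ω' = ψ (τ ω) ω := by
      unfold regret
      rw [hτω', e1, e2, e3]
      exact max_eq_right hstrict.le
    obtain ⟨hσ'Icc, hσ'le, hσ'lt⟩ := sigma_facts T ψ hω'c hT.le (hψT ω' hω'Ω) (hψc ω' hω'Ω)
    have hbddω : BddBelow {s ∈ Icc 0 T | ψ s ω ≤ Mstar ω s - ω s} :=
      ⟨0, fun s hs => hs.1.1⟩
    have hut : τ ω < sigmaStar T ψ ω' := by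
      by_contra h
      push_neg at h
      obtain ⟨g1, g2, g3⟩ := hist_eq Ω ψ htmem hψh hω ⟨hω'Ω, hω'ag⟩
        (⟨hσ'Icc.1, h⟩ : sigmaStar T ψ ω' ∈ Icc 0 (τ ω))
      have hmemω : sigmaStar T ψ ω' ∈ {s ∈ Icc 0 T | ψ s ω ≤ Mstar ω s - ω s} :=
        ⟨hσ'Icc, by rw [← g1, ← g2, ← g3]; exact hσ'le⟩
      have : sigmaStar T ψ ω ≤ sigmaStar T ψ ω' := csInf_le hbddω hmemω
      linarith
    have hψlt : ψ (sigmaStar T ψ ω') ω' < ψ (τ ω) ω := by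
      rw [← e3]
      exact hψa ω' hω'Ω htmem hσ'Icc hut
    have hlim : Mstar ω' (sigmaStar T ψ ω') - ω' (sigmaStar T ψ ω') ≤ ψ (sigmaStar T ψ ω') ω' := by
      have hu0 : (0:ℝ) < sigmaStar T ψ ω' := lt_of_le_of_lt htmem.1 hut
      have hF : ContinuousOn (fun s => ψ s ω' - (Mstar ω' s - ω' s)) (Icc 0 T) :=
        (hψc ω' hω'Ω).sub ((mstar_continuousOn hω'c).sub hω'c)
      have hne : (𝓝[Ico (0:ℝ) (sigmaStar T ψ ω')] (sigmaStar T ψ ω')).NeBot := by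
        apply mem_closure_iff_nhdsWithin_neBot.mp
        rw [closure_Ico (ne_of_lt hu0)]
        exact ⟨hu0.le, le_rfl⟩
      have hsub : Ico (0:ℝ) (sigmaStar T ψ ω') ⊆ Icc 0 T :=
        fun s hs => ⟨hs.1, hs.2.le.trans hσ'Icc.2⟩
      have htd : Tendsto (fun s => ψ s ω' - (Mstar ω' s - ω' s))
          (𝓝[Ico (0:ℝ) (sigmaStar T ψ ω')] (sigmaStar T ψ ω'))
          (𝓝 (ψ (sigmaStar T ψ ω') ω' -
            (Mstar ω' (sigmaStar T ψ ω') - ω' (sigmaStar T ψ ω')))) :=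
        (hF (sigmaStar T ψ ω') hσ'Icc).mono_left (nhdsWithin_mono _ hsub)
      have hge : 0 ≤ ψ (sigmaStar T ψ ω') ω' -
          (Mstar ω' (sigmaStar T ψ ω') - ω' (sigmaStar T ψ ω')) := by
        refine ge_of_tendsto htd ?_
        filter_upwards [self_mem_nhdsWithin] with s hs
        have := hσ'lt s (hsub hs) hs.2
        linarith
      linarith
    have : regret ψ (sigmaStar T ψ) ω' ≤ ψ (sigmaStar T ψ ω') ω' := max_le hlim le_rfl
    rw [hregτ]
    exact lt_of_le_of_lt this hψlt


end SellingRegret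

end
end
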